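/- Tensor power method convergence: let T = ∑_{i=1}^L λ_i v_i^{⊗3} with {v_i} orthonormal and λ_i > 0, and suppose θ₀ ∈ ℝ^d is such that |λ₁ v₁ᵀθ₀| is strictly the largest among {|λ_i v_iᵀθ₀| : 1 ≤ i ≤ L} (in particular v₁ᵀθ₀ ≠ 0). Define the iteration θ_t = T(I,θ_{t−1},θ_{t−1}) / ‖T(I,θ_{t−1},θ_{t−1})‖. Then for all t ≥ 1, ‖v₁ − θ_t‖² ≤ (2λ₁² ∑_{i=2}^L λ_i^{−2}) · |λ₂ v₂ᵀθ₀ / (λ₁ v₁ᵀθ₀)|^{2^{t+1}}, where the indexing is such that index 2 attains the second largest value of |λ_i v_iᵀθ₀|. -/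

import Mathlib

open Finset

lemma tpm_aux_dot {d L : ℕ} (v : Fin L → Fin d → ℝ)
    (horth : ∀ a b, (∑ i, v a i * v b i) = if a = b then (1 : ℝ) else 0)
    (a : Fin L → ℝ) (l : Fin L) :
    (∑ j, v l j * (∑ m, a m * v m j)) = a l := by
  simp only [Finset.mul_sum]
  rw [Finset.sum_comm]
  have : ∀ m : Fin L, (∑ j, v l j * (a m * v m j)) = a m * if l = m then (1:ℝ) else 0 := by
    intro m
    rw [← horth l m, Finset.mul_sum]
    congr 1; funext j; ring
  simp only [this, mul_ite, mul_one, mul_zero]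
  simp

lemma tpm_aux_norm {d L : ℕ} (v : Fin L → Fin d → ℝ)
    (horth : ∀ a b, (∑ i, v a i * v b i) = if a = b then (1 : ℝ) else 0)
    (a : Fin L → ℝ) :
    (∑ i, (∑ l, a l * v l i) ^ 2) = ∑ l, (a l) ^ 2 := by
  have : ∀ i : Fin d, (∑ l, a l * v l i) ^ 2 = ∑ l, ∑ m, a l * a m * (v l i * v m i) := by
    intro i
    rw [sq, Finset.sum_mul_sum]
    congr 1; funext l; congr 1; funext m; ring
  simp only [this]
  rw [Finset.sum_comm]
  have h2 : ∀ l : Fin L, (∑ i, ∑ m, a l * a m * (v l i * v m i)) = a l ^ 2 := by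
    intro l
    rw [Finset.sum_comm]
    have : ∀ m : Fin L, (∑ i, a l * a m * (v l i * v m i)) = a l * a m * if l = m then (1:ℝ) else 0 := by
      intro m
      rw [← horth l m, Finset.mul_sum]
    simp only [this, mul_ite, mul_one, mul_zero]
    simp [sq]
  simp only [h2]

set_option maxHeartbeats 2000000 in
theorem tensor_power_method_convergence (d L : ℕ)
    (v : Fin L → Fin d → ℝ) (lam : Fin L → ℝ) (hlam : ∀ l, 0 < lam l)
    (horth : ∀ a b, (∑ i, v a i * v b i) = if a = b then (1 : ℝ) else 0)
    (T : Fin d → Fin d → Fin d → ℝ)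
    (hT : ∀ i j k, T i j k = ∑ l, lam l * v l i * v l j * v l k)
    (θ0 : Fin d → ℝ) (i1 i2 : Fin L) (hne : i2 ≠ i1)
    (hmax : ∀ l, l ≠ i1 →
      |lam l * (∑ j, v l j * θ0 j)| < |lam i1 * (∑ j, v i1 j * θ0 j)|)
    (hsecond : ∀ l, l ≠ i1 →
      |lam l * (∑ j, v l j * θ0 j)| ≤ |lam i2 * (∑ j, v i2 j * θ0 j)|)
    (θseq : ℕ → Fin d → ℝ) (h0 : θseq 0 = θ0)
    (hiter : ∀ t i, θseq (t + 1) i =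
      (∑ j, ∑ k, T i j k * θseq t j * θseq t k) /
        Real.sqrt (∑ i', (∑ j, ∑ k, T i' j k * θseq t j * θseq t k) ^ 2)) :
    ∀ t : ℕ, 1 ≤ t →
      (∑ i, (v i1 i - θseq t i) ^ 2) ≤
        (2 * (lam i1) ^ 2 * ∑ l ∈ Finset.univ.erase i1, ((lam l) ^ 2)⁻¹) *
          |lam i2 * (∑ j, v i2 j * θ0 j) / (lam i1 * (∑ j, v i1 j * θ0 j))|
            ^ (2 ^ (t + 1)) := by
  classical
  -- coordinates and the quadratic map
  set c : (Fin d → ℝ) → Fin L → ℝ := fun θ l => ∑ j, v l j * θ j with hcdef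
  set F : (Fin d → ℝ) → Fin d → ℝ := fun θ i => ∑ l, (lam l * (c θ l) ^ 2) * v l i with hFdef
  -- Lemma A: iteration numerator is F
  have hA : ∀ (θ : Fin d → ℝ) (i : Fin d),
      (∑ j, ∑ k, T i j k * θ j * θ k) = F θ i := by
    intro θ i
    have key : ∀ l : Fin L, (lam l * (c θ l) ^ 2) * v l i
        = ∑ j, ∑ k, lam l * v l i * v l j * v l k * θ j * θ k := by
      intro l
      have e1 : (c θ l) ^ 2 = ∑ j, ∑ k, (v l j * θ j) * (v l k * θ k) := by
        simp only [hcdef]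
        rw [sq, Finset.sum_mul_sum]
      rw [e1, Finset.mul_sum, Finset.sum_mul]
      refine Finset.sum_congr rfl fun j _ => ?_
      rw [Finset.mul_sum, Finset.sum_mul]
      refine Finset.sum_congr rfl fun k _ => ?_
      ring
    simp only [hT, Finset.sum_mul]
    rw [show (∑ j, ∑ k, ∑ l, lam l * v l i * v l j * v l k * θ j * θ k)
        = ∑ j, ∑ l, ∑ k, lam l * v l i * v l j * v l k * θ j * θ k from
      Finset.sum_congr rfl fun j _ => Finset.sum_comm]
    rw [Finset.sum_comm]
    simp only [hFdef, key]
  -- coordinate of F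
  have hB : ∀ (θ : Fin d → ℝ) (l : Fin L), c (F θ) l = lam l * (c θ l) ^ 2 := by
    intro θ l
    exact tpm_aux_dot v horth (fun m => lam m * (c θ m) ^ 2) l
  -- linearity of c
  have hclin : ∀ (θ : Fin d → ℝ) (r : ℝ) (l : Fin L),
      c (fun j => θ j * r) l = c θ l * r := by
    intro θ r l
    simp only [hcdef]
    rw [Finset.sum_mul]
    congr 1; funext j; ring
  -- unnormalized sequence
  set σ : ℕ → Fin d → ℝ := fun t => Nat.rec θ0 (fun _ s => F s) t with hσdef
  have hσ0 : σ 0 = θ0 := rfl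
  have hσs : ∀ t, σ (t + 1) = F (σ t) := fun t => rfl
  -- closed form of coordinates
  have hcoord : ∀ t l, lam l * c (σ t) l = (lam l * c θ0 l) ^ (2 ^ t) := by
    intro t l
    induction t with
    | zero => simp [hσ0]
    | succ t ih =>
      have e : lam l * (lam l * c (σ t) l ^ 2) = (lam l * c (σ t) l) ^ 2 := by ring
      rw [hσs, hB, e, ih, ← pow_mul, ← pow_succ]
  -- basic positivity facts
  have hApos : 0 < |lam i1 * c θ0 i1| := lt_of_le_of_lt (abs_nonneg _) (hmax i2 hne)
  have hAne : lam i1 * c θ0 i1 ≠ 0 := abs_pos.mp hApos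
  have heven : ∀ t : ℕ, 1 ≤ t → Even (2 ^ t) := by
    intro t ht
    obtain ⟨s, rfl⟩ : ∃ s, t = s + 1 := ⟨t - 1, by omega⟩
    exact ⟨2 ^ s, by rw [pow_succ]; ring⟩
  have hcσ : ∀ t, 1 ≤ t → 0 < c (σ t) i1 := by
    intro t ht
    have h2 : 0 < lam i1 * c (σ t) i1 := by
      rw [hcoord]; exact (heven t ht).pow_pos hAne
    by_contra h
    push_neg at h
    nlinarith [hlam i1]
  -- norm identity for iterates
  have hnorm : ∀ t, (∑ i, (σ (t+1) i)^2) = ∑ l, (c (σ (t+1)) l)^2 := by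
    intro t
    have h1 : (∑ i, (σ (t+1) i)^2) = ∑ l, (lam l * (c (σ t) l)^2)^2 := by
      rw [hσs]
      exact tpm_aux_norm v horth _
    rw [h1]
    refine Finset.sum_congr rfl fun l _ => ?_
    rw [hσs, hB]
  have hNpos : ∀ t, 1 ≤ t → 0 < ∑ i, (σ t i)^2 := by
    intro t ht
    obtain ⟨s, rfl⟩ : ∃ s, t = s + 1 := ⟨t - 1, by omega⟩
    rw [hnorm s]
    have hle : (c (σ (s+1)) i1)^2 ≤ ∑ l, (c (σ (s+1)) l)^2 :=
      Finset.single_le_sum (f := fun l => (c (σ (s+1)) l)^2)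
        (fun l _ => sq_nonneg _) (Finset.mem_univ i1)
    have hp := hcσ (s+1) (by omega)
    nlinarith
  -- θseq is the normalization of σ
  have hθ : ∀ t, 1 ≤ t →
      θseq t = fun i => σ t i / Real.sqrt (∑ i', (σ t i')^2) := by
    intro t ht
    induction t with
    | zero => omega
    | succ s ih =>
      rcases Nat.eq_zero_or_pos s with hs | hs
      · subst hs
        funext i
        rw [hiter 0 i, h0]
        simp only [hA]
        rfl
      · have ihs := ih hs
        funext i
        rw [hiter s i, ihs]
        simp only [hA]
        have hNspos : 0 < Real.sqrt (∑ i', (σ s i')^2) :=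
          Real.sqrt_pos.mpr (hNpos s hs)
        set Ns := Real.sqrt (∑ i', (σ s i')^2) with hNs
        have hFs : ∀ i'' : Fin d,
            F (fun j => σ s j / Ns) i'' = σ (s+1) i'' * (Ns⁻¹)^2 := by
          intro i''
          have hc2 : ∀ l, c (fun j => σ s j / Ns) l = c (σ s) l * Ns⁻¹ := by
            intro l
            simpa [div_eq_mul_inv] using hclin (σ s) (Ns⁻¹) l
          rw [hσs]
          simp only [hFdef, hc2]
          rw [Finset.sum_mul]
          refine Finset.sum_congr rfl fun l _ => ?_
          ring
        simp only [hFs]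
        have hq : (0:ℝ) < (Ns⁻¹)^2 := by positivity
        have hden : Real.sqrt (∑ i', (σ (s+1) i' * (Ns⁻¹)^2)^2)
            = Real.sqrt (∑ i', (σ (s+1) i')^2) * (Ns⁻¹)^2 := by
          have h5 : (∑ i', (σ (s+1) i' * (Ns⁻¹)^2)^2)
              = (∑ i', (σ (s+1) i')^2) * ((Ns⁻¹)^2)^2 := by
            rw [Finset.sum_mul]
            exact Finset.sum_congr rfl fun i' _ => by ring
          rw [h5, Real.sqrt_mul (Finset.sum_nonneg fun i' _ => sq_nonneg _),
            Real.sqrt_sq hq.le]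
        rw [hden, mul_div_mul_right _ _ (ne_of_gt hq)]
  -- the main estimate
  intro t ht
  have hSpos : 0 < ∑ i, (σ t i)^2 := hNpos t ht
  set S : ℝ := ∑ i, (σ t i)^2 with hSdef
  set Nt : ℝ := Real.sqrt S with hNtdef
  have hNtpos : 0 < Nt := Real.sqrt_pos.mpr hSpos
  have hNt2 : Nt^2 = S := Real.sq_sqrt hSpos.le
  have hspan : S = ∑ l, (c (σ t) l)^2 := by
    obtain ⟨s, rfl⟩ : ∃ s, t = s + 1 := ⟨t - 1, by omega⟩
    exact hnorm s
  have hc1pos : 0 < c (σ t) i1 := hcσ t ht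
  -- left-hand side computation
  have hvθ : (∑ i, v i1 i * θseq t i) = c (σ t) i1 / Nt := by
    rw [hθ t ht, ← hSdef, ← hNtdef]
    have h6 : ∀ i : Fin d, v i1 i * (σ t i / Nt) = v i1 i * σ t i * Nt⁻¹ := by
      intro i; ring
    simp only [h6]
    rw [← Finset.sum_mul, div_eq_mul_inv]
  have hθθ : (∑ i, (θseq t i)^2) = 1 := by
    rw [hθ t ht, ← hSdef, ← hNtdef]
    have h7 : ∀ i : Fin d, (σ t i / Nt)^2 = (σ t i)^2 * (Nt⁻¹)^2 := by
      intro i; ring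
    simp only [h7]
    rw [← Finset.sum_mul, ← hSdef, ← hNt2]
    field_simp
  have hvv : (∑ i, v i1 i * v i1 i) = 1 := by
    rw [horth i1 i1, if_pos rfl]
  have hLHS : (∑ i, (v i1 i - θseq t i)^2) = 2 - 2 * (c (σ t) i1 / Nt) := by
    have h8 : ∀ i : Fin d, (v i1 i - θseq t i)^2
        = v i1 i * v i1 i - 2 * (v i1 i * θseq t i) + (θseq t i)^2 := by
      intro i; ring
    rw [Finset.sum_congr rfl fun i _ => h8 i]
    rw [Finset.sum_add_distrib, Finset.sum_sub_distrib, hvv, hθθ, ← Finset.mul_sum, hvθ]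
    ring
  set x : ℝ := c (σ t) i1 / Nt with hxdef
  have hx0 : 0 < x := div_pos hc1pos hNtpos
  have hc1S : (c (σ t) i1)^2 ≤ S := by
    rw [hspan]
    exact Finset.single_le_sum (f := fun l => (c (σ t) l)^2)
      (fun l _ => sq_nonneg _) (Finset.mem_univ i1)
  have hx2 : x^2 = (c (σ t) i1)^2 / S := by
    rw [hxdef, div_pow, hNt2]
  have hx1 : x ≤ 1 := by
    have : x^2 ≤ 1 := by
      rw [hx2]
      exact div_le_one_of_le₀ hc1S hSpos.le
    nlinarith
  set E : ℝ := ∑ l ∈ Finset.univ.erase i1, (c (σ t) l)^2 with hEdef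
  have hE0 : 0 ≤ E := Finset.sum_nonneg fun l _ => sq_nonneg _
  have hES : E + (c (σ t) i1)^2 = S := by
    rw [hspan, hEdef]
    exact Finset.sum_erase_add _ _ (Finset.mem_univ i1)
  have hstep1 : (∑ i, (v i1 i - θseq t i)^2) ≤ 2 * (1 - x^2) := by
    rw [hLHS]
    nlinarith
  have hstep2 : 1 - x^2 = E / S := by
    rw [hx2]
    field_simp
    linarith
  have hc1sqpos : 0 < (c (σ t) i1)^2 := by positivity
  have hstep3 : E / S ≤ E / (c (σ t) i1)^2 := by
    gcongr
  -- per-term bound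
  set n : ℕ := 2 ^ (t + 1) with hndef
  set q : ℝ := |lam i2 * c θ0 i2| / |lam i1 * c θ0 i1| with hqdef
  have hevn : Even n := heven (t+1) (by omega)
  have hsq : ∀ l : Fin L, (c (σ t) l)^2 = |lam l * c θ0 l| ^ n / (lam l)^2 := by
    intro l
    have hl2 : ((lam l)^2 : ℝ) ≠ 0 := pow_ne_zero 2 (ne_of_gt (hlam l))
    have h1 : (lam l * c (σ t) l)^2 = (lam l * c θ0 l) ^ n := by
      rw [hcoord, ← pow_mul, hndef, ← pow_succ]
    have h2 : (lam l * c θ0 l) ^ n = |lam l * c θ0 l| ^ n := (hevn.pow_abs _).symm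
    rw [← h2, ← h1, mul_pow]
    exact (mul_div_cancel_left₀ _ hl2).symm
  have hterm : ∀ l ∈ Finset.univ.erase i1,
      (c (σ t) l)^2 / (c (σ t) i1)^2 ≤ (lam i1)^2 * ((lam l)^2)⁻¹ * q ^ n := by
    intro l hl
    have hl1 : l ≠ i1 := Finset.ne_of_mem_erase hl
    rw [div_le_iff₀ hc1sqpos, hsq l, hsq i1]
    have habstract : ∀ a b e f : ℝ, a ≠ 0 → f ≠ 0 → a * b⁻¹ * (e/f) * (f/a) = e/b := by
      intro a b e f ha hf
      have h1 : a * a⁻¹ = 1 := mul_inv_cancel₀ ha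
      have h2 : f * f⁻¹ = 1 := mul_inv_cancel₀ hf
      calc a * b⁻¹ * (e/f) * (f/a)
          = (a*a⁻¹) * (f*f⁻¹) * (e * b⁻¹) := by
            simp only [div_eq_mul_inv]; ring
        _ = e/b := by rw [h1, h2, div_eq_mul_inv]; ring
    have hrhs : (lam i1)^2 * ((lam l)^2)⁻¹ * q ^ n
        * (|lam i1 * c θ0 i1| ^ n / (lam i1)^2)
        = |lam i2 * c θ0 i2| ^ n / (lam l)^2 := by
      rw [hqdef, div_pow]
      exact habstract _ _ _ _ (pow_ne_zero 2 (ne_of_gt (hlam i1)))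
        (ne_of_gt (pow_pos hApos n))
    rw [hrhs]
    have hlc : (0:ℝ) < (lam l)^2 := pow_pos (hlam l) 2
    have hp : |lam l * c θ0 l| ^ n ≤ |lam i2 * c θ0 i2| ^ n :=
      pow_le_pow_left₀ (abs_nonneg _) (hsecond l hl1) n
    exact (div_le_div_iff_of_pos_right hlc).mpr hp
  have hstep4 : E / (c (σ t) i1)^2
      ≤ ((lam i1)^2 * ∑ l ∈ Finset.univ.erase i1, ((lam l)^2)⁻¹) * q ^ n := by
    rw [hEdef, Finset.sum_div]
    calc (∑ l ∈ Finset.univ.erase i1, (c (σ t) l)^2 / (c (σ t) i1)^2)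
        ≤ ∑ l ∈ Finset.univ.erase i1, (lam i1)^2 * ((lam l)^2)⁻¹ * q ^ n :=
          Finset.sum_le_sum hterm
      _ = ((lam i1)^2 * ∑ l ∈ Finset.univ.erase i1, ((lam l)^2)⁻¹) * q ^ n := by
          rw [Finset.mul_sum, Finset.sum_mul]
  -- assemble
  calc (∑ i, (v i1 i - θseq t i)^2)
      ≤ 2 * (1 - x^2) := hstep1
    _ = 2 * (E / S) := by rw [hstep2]
    _ ≤ 2 * (E / (c (σ t) i1)^2) := by linarith
    _ ≤ 2 * (((lam i1)^2 * ∑ l ∈ Finset.univ.erase i1, ((lam l)^2)⁻¹) * q ^ n) := by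
        linarith
    _ = (2 * (lam i1)^2 * ∑ l ∈ Finset.univ.erase i1, ((lam l)^2)⁻¹) * q ^ n := by
        ring
    _ = (2 * (lam i1)^2 * ∑ l ∈ Finset.univ.erase i1, ((lam l)^2)⁻¹) *
          |lam i2 * (∑ j, v i2 j * θ0 j) / (lam i1 * (∑ j, v i1 j * θ0 j))| ^ n := by
        rw [hqdef, abs_div]
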